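/- arXiv:2605.01438 — 2 statements merged into one kernel-verified Lean document; each statement's English description precedes it below -/
import Mathlib

section
/- Let α_{u,b} be real coefficients with ∑_{u,b} α_{u,b} P_{u,b} = O, where for each u, {P_{u,b}}_b are positive semidefinite operators summing to the identity. Set m_u = max_b |α_{u,b}| and L = ∑_u m_u, and define the sampling law q(u) = m_u/L when m_u > 0 (and 0 otherwise). Then for every density operator ρ, the second-moment operator M = ∑_{u,b} (α_{u,b}²/q(u)) P_{u,b} (omitting terms with q(u)=0) satisfies tr(ρ M) ≤ L², and hence the variance tr(ρ M) − tr(ρ O)² is at most L². -/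
open Matrix ComplexOrder

lemma psd_smul_real {n : Type*} [Fintype n] {A : Matrix n n ℂ} (hA : A.PosSemidef)
    {c : ℝ} (hc : 0 ≤ c) : ((c : ℂ) • A).PosSemidef := by
  refine Matrix.PosSemidef.of_dotProduct_mulVec_nonneg ?_ ?_
  · unfold Matrix.IsHermitian
    rw [conjTranspose_smul, hA.1.eq]
    norm_num
  · intro x
    have := hA.dotProduct_mulVec_nonneg x
    rw [smul_mulVec, dotProduct_smul]
    exact mul_nonneg (by exact_mod_cast hc) this

lemma psd_trace_nonneg {n : Type*} [Fintype n] [DecidableEq n] {A : Matrix n n ℂ}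
    (hA : A.PosSemidef) : 0 ≤ A.trace := by
  rw [Matrix.trace]
  refine Finset.sum_nonneg fun i _ => ?_
  have := hA.dotProduct_mulVec_nonneg (Pi.single i 1)
  simpa [dotProduct, Matrix.mulVec, Pi.single_apply, Finset.mul_sum] using this

lemma psd_trace_mul_nonneg {n : Type*} [Fintype n] [DecidableEq n]
    {A B : Matrix n n ℂ} (hA : A.PosSemidef) (hB : B.PosSemidef) :
    0 ≤ (A * B).trace := by
  obtain ⟨C, rfl⟩ : ∃ C : Matrix n n ℂ, B = Cᴴ * C := by
    open scoped MatrixOrder in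
    exact ⟨CFC.sqrt B, by
      rw [(CFC.sqrt_nonneg B).posSemidef.1.eq, CFC.sqrt_mul_sqrt_self B hB.nonneg]⟩
  have h1 : (A * (Cᴴ * C)).trace = (C * A * Cᴴ).trace := by
    rw [← Matrix.mul_assoc, Matrix.trace_mul_comm, ← Matrix.mul_assoc]
  rw [h1]
  exact psd_trace_nonneg (hA.mul_mul_conjTranspose_same C)

lemma psd_sum {n ι : Type*} [Fintype n] (s : Finset ι) (f : ι → Matrix n n ℂ)
    (h : ∀ i ∈ s, (f i).PosSemidef) : (∑ i ∈ s, f i).PosSemidef := by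
  classical
  induction s using Finset.induction_on with
  | empty => simpa using Matrix.PosSemidef.zero
  | insert _ _ hx ih =>
    rw [Finset.sum_insert hx]
    exact (h _ (Finset.mem_insert_self _ _)).add
      (ih fun i hi => h i (Finset.mem_insert_of_mem hi))

theorem oasis_surrogate_upper_bounds_variance
    {d : ℕ} {U : Type*} [Fintype U] [Nonempty U]
    {B : U → Type*} [∀ u, Fintype (B u)] [∀ u, Nonempty (B u)]
    (P : (u : U) → B u → Matrix (Fin d) (Fin d) ℂ)
    (hP_psd : ∀ u b, (P u b).PosSemidef)
    (hP_sum : ∀ u, ∑ b, P u b = 1)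
    (O : Matrix (Fin d) (Fin d) ℂ) (hO : O.IsHermitian)
    (α : (u : U) → B u → ℝ)
    (hunb : ∑ u, ∑ b, (α u b : ℂ) • P u b = O)
    (m : U → ℝ) (hm : ∀ u, m u = Finset.univ.sup' Finset.univ_nonempty (fun b => |α u b|))
    (L : ℝ) (hL : L = ∑ u, m u) (hLpos : 0 < L)
    (q : U → ℝ) (hq : ∀ u, q u = m u / L)
    (M : Matrix (Fin d) (Fin d) ℂ)
    (hM : M = ∑ u, ∑ b, ((α u b ^ 2 / q u : ℝ) : ℂ) • P u b)
    (ρ : Matrix (Fin d) (Fin d) ℂ) (hρ : ρ.PosSemidef) (hρ1 : ρ.trace = 1) :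
    ((ρ * M).trace).re ≤ L ^ 2 ∧
    ((ρ * M).trace).re - ((ρ * O).trace).re ^ 2 ≤ L ^ 2 := by
  have habs : ∀ u b, |α u b| ≤ m u := fun u b => by
    rw [hm u]; exact Finset.le_sup' (fun b => |α u b|) (Finset.mem_univ b)
  have hm0 : ∀ u, 0 ≤ m u := by
    intro u
    obtain ⟨b⟩ : Nonempty (B u) := inferInstance
    exact le_trans (abs_nonneg (α u b)) (habs u b)
  -- coefficient bound
  have hc : ∀ u b, 0 ≤ m u * L - α u b ^ 2 / q u := by
    intro u b
    rcases eq_or_lt_of_le (hm0 u) with h0 | hpos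
    · have hα : α u b = 0 := by
        have := habs u b; rw [← h0] at this
        exact abs_eq_zero.mp (le_antisymm this (abs_nonneg _))
      have hq0 : q u = 0 := by rw [hq, ← h0, zero_div]
      simp [hα, hq0, ← h0]
    · have hqpos : 0 < q u := by rw [hq]; positivity
      have h1 : α u b ^ 2 / q u ≤ m u * L := by
        rw [div_le_iff₀ hqpos, hq]
        have : α u b ^ 2 ≤ m u ^ 2 := by
          rw [← sq_abs]; exact pow_le_pow_left₀ (abs_nonneg _) (habs u b) 2
        calc α u b ^ 2 ≤ m u ^ 2 := this
          _ = m u * L * (m u / L) := by field_simp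
      linarith
  set N : Matrix (Fin d) (Fin d) ℂ := ((L ^ 2 : ℝ) : ℂ) • 1 - M with hN
  have hNsum : N = ∑ u, ∑ b, ((m u * L - α u b ^ 2 / q u : ℝ) : ℂ) • P u b := by
    have h1 : ((L ^ 2 : ℝ) : ℂ) • (1 : Matrix (Fin d) (Fin d) ℂ)
        = ∑ u, ∑ b, ((m u * L : ℝ) : ℂ) • P u b := by
      have : ∀ u, ∑ b, ((m u * L : ℝ) : ℂ) • P u b
          = ((m u * L : ℝ) : ℂ) • (1 : Matrix (Fin d) (Fin d) ℂ) := by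
        intro u; rw [← Finset.smul_sum, hP_sum]
      rw [Finset.sum_congr rfl (fun u _ => this u), ← Finset.sum_smul]
      congr 1
      norm_cast
      rw [← Finset.sum_mul, ← hL]
      ring
    rw [hN, h1, hM, ← Finset.sum_sub_distrib]
    refine Finset.sum_congr rfl fun u _ => ?_
    rw [← Finset.sum_sub_distrib]
    refine Finset.sum_congr rfl fun b _ => ?_
    rw [← sub_smul]
    push_cast
    ring_nf
  have hNpsd : N.PosSemidef := by
    rw [hNsum]
    refine psd_sum _ _ fun u _ => psd_sum _ _ fun b _ => psd_smul_real (hP_psd u b) (hc u b)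
  have htr : 0 ≤ (ρ * N).trace := psd_trace_mul_nonneg hρ hNpsd
  have htrace_eq : (ρ * N).trace = ((L ^ 2 : ℝ) : ℂ) - (ρ * M).trace := by
    rw [hN, Matrix.mul_sub, Matrix.trace_sub, Matrix.mul_smul, Matrix.mul_one,
      Matrix.trace_smul, hρ1, smul_eq_mul, mul_one]
  have hre : ((ρ * M).trace).re ≤ L ^ 2 := by
    have := (Complex.le_def.mp htr).1
    rw [htrace_eq] at this
    simp only [Complex.sub_re, Complex.ofReal_re, Complex.zero_re] at this
    linarith
  exact ⟨hre, by nlinarith [sq_nonneg (((ρ * O).trace).re)]⟩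
end

section
/- Let M be a Hermitian operator and O a rank-one orthogonal projection on a finite-dimensional complex Hilbert space. Then sup over density operators ρ of (tr(ρ M) − tr(ρ O)²) equals min over t ∈ ℝ of (λ_max(M − 2tO) + t²). -/
open Matrix ComplexOrder

noncomputable def lamMax {d : ℕ} (A : Matrix (Fin d) (Fin d) ℂ) : ℝ :=
  sSup {r : ℝ | ∃ v : Fin d → ℂ, v ≠ 0 ∧ A *ᵥ v = (r : ℂ) • v}

namespace SpecAux

variable {d : ℕ}

lemma mem_eigset_iff {A : Matrix (Fin d) (Fin d) ℂ} (hA : A.IsHermitian) (r : ℝ) :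
    (∃ v : Fin d → ℂ, v ≠ 0 ∧ A *ᵥ v = (r : ℂ) • v) ↔ ∃ i, hA.eigenvalues i = r := by
  constructor
  · rintro ⟨v, hv, hAv⟩
    have hr : r ∈ spectrum ℝ A := by
      rw [spectrum.mem_iff, Matrix.isUnit_iff_isUnit_det, isUnit_iff_ne_zero, ne_eq, not_not,
        ← Matrix.exists_mulVec_eq_zero_iff]
      refine ⟨v, hv, ?_⟩
      rw [Algebra.algebraMap_eq_smul_one, Matrix.sub_mulVec, Matrix.smul_mulVec,
        Matrix.one_mulVec, hAv, sub_eq_zero]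
      ext j
      simp [Complex.real_smul]
    rw [hA.spectrum_real_eq_range_eigenvalues] at hr
    exact hr
  · rintro ⟨i, hi⟩
    refine ⟨⇑(hA.eigenvectorBasis i), ?_, ?_⟩
    · exact fun h => hA.eigenvectorBasis.orthonormal.ne_zero i (by ext j; exact congrFun h j)
    · rw [hA.mulVec_eigenvectorBasis, hi]
      ext j
      simp [Complex.real_smul]

lemma isGreatest_lamMax (hd : 0 < d) {A : Matrix (Fin d) (Fin d) ℂ} (hA : A.IsHermitian) :
    IsGreatest {r : ℝ | ∃ v : Fin d → ℂ, v ≠ 0 ∧ A *ᵥ v = (r : ℂ) • v} (lamMax A) := by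
  have hne : (Finset.univ : Finset (Fin d)).Nonempty := ⟨⟨0, hd⟩, Finset.mem_univ _⟩
  set l := Finset.univ.sup' hne hA.eigenvalues with hl
  have hG : IsGreatest {r : ℝ | ∃ v : Fin d → ℂ, v ≠ 0 ∧ A *ᵥ v = (r : ℂ) • v} l := by
    constructor
    · obtain ⟨i, _, hi⟩ := Finset.exists_mem_eq_sup' hne hA.eigenvalues
      exact (mem_eigset_iff hA l).2 ⟨i, hi.symm⟩
    · rintro r hr
      obtain ⟨i, hi⟩ := (mem_eigset_iff hA r).1 hr
      exact hi ▸ Finset.le_sup' _ (Finset.mem_univ i)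
  have h : lamMax A = l := IsGreatest.csSup_eq hG
  rw [h]
  exact hG

end SpecAux

namespace SpecAux2
open SpecAux

variable {d : ℕ}

lemma re_trace_psd_mul_nonneg {ρ B : Matrix (Fin d) (Fin d) ℂ} (hρ : ρ.PosSemidef)
    (hB : B.PosSemidef) : 0 ≤ ((ρ * B).trace).re := by
  obtain ⟨S, hSherm, hSS⟩ : ∃ S : Matrix (Fin d) (Fin d) ℂ, S.IsHermitian ∧ S * S = ρ := by
    open scoped MatrixOrder in
    exact ⟨CFC.sqrt ρ, (CFC.sqrt_nonneg ρ).posSemidef.1, CFC.sqrt_mul_sqrt_self ρ hρ.nonneg⟩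
  have hC : (Sᴴ * B * S).PosSemidef := hB.conjTranspose_mul_mul_same S
  have htr : (ρ * B).trace = (Sᴴ * B * S).trace := by
    rw [Matrix.trace_mul_cycle Sᴴ B S, hSherm, hSS]
  rw [htr, Matrix.trace]
  rw [Complex.re_sum]
  apply Finset.sum_nonneg
  intro i _
  have := hC.re_dotProduct_nonneg (Pi.single i 1)
  simpa [Matrix.diag, dotProduct, Matrix.mulVec_single, Pi.single_apply, Finset.sum_ite_eq,
    star_one] using this

lemma smul_one_sub_isHermitian {A : Matrix (Fin d) (Fin d) ℂ} (hA : A.IsHermitian) (l : ℝ) :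
    ((l : ℂ) • (1 : Matrix (Fin d) (Fin d) ℂ) - A).IsHermitian := by
  apply Matrix.IsHermitian.sub _ hA
  unfold Matrix.IsHermitian
  rw [Matrix.conjTranspose_smul, Matrix.isHermitian_one]
  simp

lemma trace_le_lamMax (hd : 0 < d) {A : Matrix (Fin d) (Fin d) ℂ} (hA : A.IsHermitian)
    {ρ : Matrix (Fin d) (Fin d) ℂ} (hρ : ρ.PosSemidef) (htr : ρ.trace = 1) :
    ((ρ * A).trace).re ≤ lamMax A := by
  set l := lamMax A with hl
  have hG := isGreatest_lamMax hd hA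
  have hBh : ((l : ℂ) • (1 : Matrix (Fin d) (Fin d) ℂ) - A).IsHermitian :=
    smul_one_sub_isHermitian hA l
  have hBpsd : ((l : ℂ) • (1 : Matrix (Fin d) (Fin d) ℂ) - A).PosSemidef := by
    apply hBh.posSemidef_iff_eigenvalues_nonneg.mpr
    intro i
    set μ := hBh.eigenvalues i with hμ
    by_contra hneg
    push_neg at hneg
    have hv := hBh.mulVec_eigenvectorBasis i
    set v : Fin d → ℂ := ⇑(hBh.eigenvectorBasis i) with hvdef
    have hvne : v ≠ 0 :=
      fun h => hBh.eigenvectorBasis.orthonormal.ne_zero i (by ext j; exact congrFun h j)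
    have hAv : A *ᵥ v = ((l - μ : ℝ) : ℂ) • v := by
      have h1 : ((l : ℂ) • (1 : Matrix (Fin d) (Fin d) ℂ) - A) *ᵥ v = μ • v := hv
      rw [Matrix.sub_mulVec, Matrix.smul_mulVec, Matrix.one_mulVec] at h1
      have : A *ᵥ v = (l : ℂ) • v - μ • v := by
        rw [← h1]; abel
      rw [this]
      ext j
      simp only [Pi.sub_apply, Pi.smul_apply, Complex.real_smul, smul_eq_mul,
        Complex.ofReal_sub]
      ring
    have := hG.2 ⟨v, hvne, hAv⟩
    linarith [show μ < 0 from hneg]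
  have h0 := re_trace_psd_mul_nonneg hρ hBpsd
  have hexp : (ρ * ((l : ℂ) • (1 : Matrix (Fin d) (Fin d) ℂ) - A)).trace
      = (l : ℂ) - (ρ * A).trace := by
    rw [Matrix.mul_sub, Matrix.trace_sub, Matrix.mul_smul, Matrix.mul_one, Matrix.trace_smul,
      htr, smul_eq_mul, mul_one]
  rw [hexp] at h0
  simp only [Complex.sub_re, Complex.ofReal_re] at h0
  linarith

lemma exists_density_trace_eq (hd : 0 < d) {A : Matrix (Fin d) (Fin d) ℂ} (hA : A.IsHermitian) :
    ∃ ρ : Matrix (Fin d) (Fin d) ℂ, ρ.PosSemidef ∧ ρ.trace = 1 ∧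
      ((ρ * A).trace).re = lamMax A := by
  obtain ⟨v, hvne, hAv⟩ := (isGreatest_lamMax hd hA).1
  -- normalize using eigenvector basis instead
  obtain ⟨i, hi⟩ := (mem_eigset_iff hA (lamMax A)).1 ⟨v, hvne, hAv⟩
  clear hvne hAv v
  set w : Fin d → ℂ := ⇑(hA.eigenvectorBasis i) with hwdef
  have hunit : star w ⬝ᵥ w = 1 := by
    have h1 : (inner ℂ (hA.eigenvectorBasis i) (hA.eigenvectorBasis i) : ℂ) = 1 := by
      rw [inner_self_eq_norm_sq_to_K, hA.eigenvectorBasis.orthonormal.1 i]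
      simp
    rw [EuclideanSpace.inner_eq_star_dotProduct, dotProduct_comm] at h1
    exact h1
  have hAw : A *ᵥ w = ((lamMax A : ℝ) : ℂ) • w := by
    rw [hA.mulVec_eigenvectorBasis, hi]
    ext j
    rw [Pi.smul_apply, Pi.smul_apply, Complex.real_smul, smul_eq_mul]
  refine ⟨Matrix.vecMulVec w (star w), ?_, ?_, ?_⟩
  · rw [Matrix.vecMulVec_eq Unit, ← Matrix.conjTranspose_replicateCol]
    exact Matrix.posSemidef_self_mul_conjTranspose _
  · have : (Matrix.vecMulVec w (star w)).trace = star w ⬝ᵥ w := by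
      simp [Matrix.trace, Matrix.diag, Matrix.vecMulVec_apply, dotProduct, mul_comm]
    rw [this, hunit]
  · have htr : (Matrix.vecMulVec w (star w) * A).trace = star w ⬝ᵥ (A *ᵥ w) := by
      simp only [Matrix.trace, Matrix.diag, Matrix.mul_apply, Matrix.vecMulVec_apply,
        dotProduct, Matrix.mulVec, Pi.star_apply]
      rw [Finset.sum_comm]
      apply Finset.sum_congr rfl
      intro j _
      rw [Finset.mul_sum]
      apply Finset.sum_congr rfl
      intro k _
      ring
    rw [htr, hAw, dotProduct_smul, hunit]
    simp

end SpecAux2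

namespace MainAux

open Filter Topology

lemma key {K : Set (ℝ × ℝ)} (hKc : IsCompact K) {m : ℝ → ℝ}
    (hub : ∀ t : ℝ, ∀ p ∈ K, p.1 - 2 * t * p.2 ≤ m t)
    (hex : ∀ t : ℝ, ∃ p ∈ K, p.1 - 2 * t * p.2 = m t)
    (hq : ∀ p ∈ K, |p.2| ≤ 1)
    {ts : ℝ} (hmin : ∀ t : ℝ, m ts + ts ^ 2 ≤ m t + t ^ 2) :
    ∃ p ∈ K, p.1 - 2 * ts * p.2 = m ts ∧ p.2 ≤ ts := by
  have hδ : ∀ n : ℕ, (0:ℝ) < 1 / (n + 1) := fun n => by positivity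
  choose p hpK hpeq using fun n : ℕ => hex (ts + 1 / (n + 1))
  set t : ℕ → ℝ := fun n => ts + 1 / (n + 1) with ht
  have htt : Tendsto t atTop (𝓝 ts) := by
    have h0 := tendsto_one_div_add_atTop_nhds_zero_nat (𝕜 := ℝ)
    have := (tendsto_const_nhds (x := ts)).add h0
    simpa [ht, one_div] using this
  have hts : ∀ n : ℕ, ts < t n := by
    intro n
    have := hδ n
    simp only [ht]
    linarith
  have main1 : ∀ a q u : ℝ, ts < u → a - 2 * u * q = m u → a - 2 * ts * q ≤ m ts →
      q ≤ (u + ts) / 2 := by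
    intro a q u hu h1 h2
    have h3 := hmin u
    have h4 : (2 * (u - ts)) * q ≤ (2 * (u - ts)) * ((u + ts) / 2) := by nlinarith
    exact le_of_mul_le_mul_left h4 (by linarith)
  have main2 : ∀ a q u : ℝ, ts < u → -1 ≤ q → a - 2 * u * q = m u →
      m ts + ts ^ 2 - u ^ 2 - 2 * (u - ts) ≤ a - 2 * ts * q := by
    intro a q u hu hq1 h1
    have h3 := hmin u
    nlinarith [mul_nonneg (by linarith : (0:ℝ) ≤ u - ts) (by linarith : (0:ℝ) ≤ q + 1)]
  have hqb : ∀ n, (p n).2 ≤ (t n + ts) / 2 := fun n =>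
    main1 _ _ _ (hts n) (hpeq n) (hub ts _ (hpK n))
  have hlb : ∀ n, m ts + ts ^ 2 - (t n) ^ 2 - 2 * (t n - ts)
      ≤ (p n).1 - 2 * ts * (p n).2 := fun n =>
    main2 _ _ _ (hts n) (neg_le_of_abs_le (hq _ (hpK n))) (hpeq n)
  obtain ⟨z, hzK, φ, hφ, htendz⟩ := hKc.tendsto_subseq hpK
  have htφ : Tendsto (t ∘ φ) atTop (𝓝 ts) := htt.comp hφ.tendsto_atTop
  have hz1 : Tendsto (fun n => (p (φ n)).1) atTop (𝓝 z.1) :=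
    (continuous_fst.tendsto z).comp htendz
  have hz2 : Tendsto (fun n => (p (φ n)).2) atTop (𝓝 z.2) :=
    (continuous_snd.tendsto z).comp htendz
  have hzq : z.2 ≤ ts := by
    have h2 : Tendsto (fun n => (t (φ n) + ts) / 2) atTop (𝓝 ts) := by
      have h2a : Tendsto (fun n => (t (φ n) + ts) / 2) atTop (𝓝 ((ts + ts) / 2)) :=
        (htφ.add (tendsto_const_nhds (x := ts))).div_const 2
      have : (ts + ts) / 2 = ts := by ring
      rwa [this] at h2a
    exact le_of_tendsto_of_tendsto' hz2 h2 fun n => hqb (φ n)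
  have hzeq : z.1 - 2 * ts * z.2 = m ts := by
    have hle : z.1 - 2 * ts * z.2 ≤ m ts := hub ts z hzK
    have hge : m ts ≤ z.1 - 2 * ts * z.2 := by
      have hL : Tendsto (fun n => (p (φ n)).1 - 2 * ts * (p (φ n)).2) atTop
          (𝓝 (z.1 - 2 * ts * z.2)) := hz1.sub (hz2.const_mul _)
      have hR : Tendsto (fun n => m ts + ts ^ 2 - (t (φ n)) ^ 2 - 2 * (t (φ n) - ts)) atTop
          (𝓝 (m ts)) := by
        have h1 : Tendsto (fun n => (t (φ n)) ^ 2) atTop (𝓝 (ts ^ 2)) := htφ.pow 2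
        have h2 : Tendsto (fun n => t (φ n) - ts) atTop (𝓝 0) := by
          simpa using htφ.sub (tendsto_const_nhds (x := ts))
        have := ((tendsto_const_nhds (x := m ts + ts ^ 2)).sub h1).sub (h2.const_mul 2)
        simpa [mul_comm] using this
      exact le_of_tendsto_of_tendsto' hR hL fun n => hlb (φ n)
    linarith
  exact ⟨z, hzK, hzeq, hzq⟩

end MainAux

namespace MainAux2
open SpecAux SpecAux2

variable {d : ℕ}

lemma isHermitian_real_smul {c : ℝ} {B : Matrix (Fin d) (Fin d) ℂ} (hB : B.IsHermitian) :
    (c • B).IsHermitian := by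
  unfold Matrix.IsHermitian at *
  rw [Matrix.conjTranspose_smul, star_trivial, hB]

lemma posSemidef_real_smul {c : ℝ} (hc : 0 ≤ c) {B : Matrix (Fin d) (Fin d) ℂ}
    (hB : B.PosSemidef) : (c • B).PosSemidef := by
  refine Matrix.PosSemidef.of_dotProduct_mulVec_nonneg (isHermitian_real_smul hB.1) fun x => ?_
  rw [Matrix.smul_mulVec, dotProduct_smul, Complex.real_smul]
  exact mul_nonneg (Complex.zero_le_real.2 hc) (hB.dotProduct_mulVec_nonneg x)

lemma isClosed_nonneg_complex : IsClosed {z : ℂ | 0 ≤ z} := by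
  have h : {z : ℂ | 0 ≤ z} = Complex.re ⁻¹' (Set.Ici 0) ∩ Complex.im ⁻¹' {0} := by
    ext z
    simp only [Set.mem_setOf_eq, Complex.le_def, Complex.zero_re, Complex.zero_im,
      Set.mem_inter_iff, Set.mem_preimage, Set.mem_Ici, Set.mem_singleton_iff]
    exact and_congr Iff.rfl eq_comm
  rw [h]
  exact (isClosed_Ici.preimage Complex.continuous_re).inter
    (isClosed_singleton.preimage Complex.continuous_im)

lemma isClosed_density :
    IsClosed {ρ : Matrix (Fin d) (Fin d) ℂ | ρ.PosSemidef ∧ ρ.trace = 1} := by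
  have h1 : IsClosed {ρ : Matrix (Fin d) (Fin d) ℂ | ρ.trace = 1} :=
    isClosed_eq (Continuous.matrix_trace continuous_id) continuous_const
  have h2 : IsClosed {ρ : Matrix (Fin d) (Fin d) ℂ | ρ.PosSemidef} := by
    have hset : {ρ : Matrix (Fin d) (Fin d) ℂ | ρ.PosSemidef}
        = {ρ : Matrix (Fin d) (Fin d) ℂ | ρᴴ = ρ}
          ∩ ⋂ x : Fin d → ℂ, {ρ : Matrix (Fin d) (Fin d) ℂ | 0 ≤ star x ⬝ᵥ ρ *ᵥ x} := by
      ext ρ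
      simp only [Set.mem_setOf_eq, Set.mem_inter_iff, Set.mem_iInter]
      exact Matrix.posSemidef_iff_dotProduct_mulVec
    rw [hset]
    refine IsClosed.inter ?_ (isClosed_iInter fun x => ?_)
    · exact isClosed_eq (Continuous.matrix_conjTranspose continuous_id) continuous_id
    · have hc : Continuous fun ρ : Matrix (Fin d) (Fin d) ℂ => star x ⬝ᵥ ρ *ᵥ x := by
        apply Continuous.dotProduct continuous_const
        exact Continuous.matrix_mulVec continuous_id continuous_const
      exact isClosed_nonneg_complex.preimage hc
  exact (Set.setOf_and ▸ h2.inter h1 : _)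

lemma diag_entry_nonneg {ρ : Matrix (Fin d) (Fin d) ℂ} (hρ : ρ.PosSemidef) (i : Fin d) :
    0 ≤ ρ i i := by
  have h := hρ.dotProduct_mulVec_nonneg (Pi.single i 1)
  have hs : star (Pi.single i 1 : Fin d → ℂ) = Pi.single i 1 := by
    ext k
    simp [Pi.single_apply, apply_ite]
  rw [hs, Matrix.mulVec_single, single_dotProduct] at h
  simpa using h

lemma entry_norm_le_one {ρ : Matrix (Fin d) (Fin d) ℂ} (hρ : ρ.PosSemidef)
    (htr : ρ.trace = 1) (i j : Fin d) : ‖ρ i j‖ ≤ 1 := by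
  have hdiag0 : ∀ k, 0 ≤ ρ k k := diag_entry_nonneg hρ
  have hdiag1 : ∀ k : Fin d, ρ k k ≤ 1 := by
    intro k
    have := Finset.single_le_sum (f := fun l => ρ l l)
      (fun l _ => hdiag0 l) (Finset.mem_univ k)
    rwa [show ∑ l, ρ l l = ρ.trace from rfl, htr] at this
  have hre0 : ∀ k, 0 ≤ (ρ k k).re := fun k => (Complex.le_def.1 (hdiag0 k)).1
  have hre1 : ∀ k, (ρ k k).re ≤ 1 := fun k => by
    simpa using (Complex.le_def.1 (hdiag1 k)).1
  have hnsq : Complex.normSq (ρ i j) ≤ 1 := by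
    by_cases hij : i = j
    · subst hij
      have him : (ρ i i).im = 0 := by
        have := (Complex.le_def.1 (hdiag0 i)).2
        simpa using this.symm
      rw [Complex.normSq_apply, him]
      nlinarith [hre0 i, hre1 i]
    · -- off-diagonal 2x2 argument
      set r := ρ i j with hr
      have hji : ρ j i = star r := by
        rw [hr, ← Matrix.conjTranspose_apply, hρ.1]
      set x : Fin d → ℂ := Pi.single i r + Pi.single j (-1) with hx
      have hq := hρ.dotProduct_mulVec_nonneg x
      have hstar : star x = Pi.single i (star r) + Pi.single j (-1) := by
        ext k
        by_cases hk : k = i <;> by_cases hk' : k = j <;>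
          simp [hx, Pi.single_apply, hk, hk', star_add, hij]
      have hqval : star x ⬝ᵥ ρ *ᵥ x
          = (Complex.normSq r : ℂ) * ρ i i + ρ j j - 2 * (Complex.normSq r : ℂ) := by
        rw [hstar, hx]
        rw [Matrix.mulVec_add, add_dotProduct]
        have hv1 : ρ *ᵥ Pi.single i r = fun k => ρ k i * r := Matrix.mulVec_single ρ i r
        have hv2 : ρ *ᵥ Pi.single j (-1 : ℂ) = fun k => ρ k j * (-1) :=
          Matrix.mulVec_single ρ j (-1)
        rw [hv1, hv2]
        rw [dotProduct_add, dotProduct_add]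
        rw [single_dotProduct, single_dotProduct,
          single_dotProduct, single_dotProduct]
        rw [hji]
        simp only [Complex.star_def]
        rw [Complex.normSq_eq_conj_mul_self]
        ring
      rw [hqval] at hq
      have hqre := (Complex.le_def.1 hq).1
      simp only [Complex.sub_re, Complex.add_re, Complex.mul_re, Complex.ofReal_re,
        Complex.ofReal_im, Complex.zero_re, Complex.re_ofNat, Complex.im_ofNat] at hqre
      have hnn := Complex.normSq_nonneg r
      nlinarith [hre1 i, hre1 j, mul_le_of_le_one_right hnn (hre1 i)]
  have habs : ‖ρ i j‖ ^ 2 ≤ 1 := by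
    rw [Complex.sq_norm]
    exact hnsq
  nlinarith [norm_nonneg (ρ i j)]

lemma isCompact_density :
    IsCompact {ρ : Matrix (Fin d) (Fin d) ℂ | ρ.PosSemidef ∧ ρ.trace = 1} := by
  have hC : IsCompact (Set.univ.pi fun _ : Fin d =>
      (Set.univ.pi fun _ : Fin d => Metric.closedBall (0:ℂ) 1)) :=
    isCompact_univ_pi fun _ => isCompact_univ_pi fun _ => isCompact_closedBall 0 1
  apply IsCompact.of_isClosed_subset hC isClosed_density
  rintro ρ ⟨hρ, htr⟩
  intro i _
  intro j _
  simpa [Metric.mem_closedBall, dist_eq_norm] using entry_norm_le_one hρ htr i j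

end MainAux2

set_option maxHeartbeats 1000000 in
open SpecAux SpecAux2 MainAux MainAux2 in
theorem exact_spectral_minimax_identity
    {d : ℕ} (hd : 0 < d)
    (M O : Matrix (Fin d) (Fin d) ℂ)
    (hM : M.IsHermitian) (hO : O.IsHermitian)
    (hOproj : O * O = O) (hOrank : O.trace = 1) :
    sSup {x : ℝ | ∃ ρ : Matrix (Fin d) (Fin d) ℂ, ρ.PosSemidef ∧ ρ.trace = 1 ∧
        x = ((ρ * M).trace).re - ((ρ * O).trace).re ^ 2}
      = ⨅ t : ℝ, (lamMax (M - (2 * t : ℝ) • O) + t ^ 2) := by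
  classical
  set S := {x : ℝ | ∃ ρ : Matrix (Fin d) (Fin d) ℂ, ρ.PosSemidef ∧ ρ.trace = 1 ∧
      x = ((ρ * M).trace).re - ((ρ * O).trace).re ^ 2} with hS
  set K : Set (ℝ × ℝ) := (fun ρ : Matrix (Fin d) (Fin d) ℂ =>
      (((ρ * M).trace).re, ((ρ * O).trace).re)) ''
      {ρ : Matrix (Fin d) (Fin d) ℂ | ρ.PosSemidef ∧ ρ.trace = 1} with hK
  set m : ℝ → ℝ := fun t => lamMax (M - (2 * t : ℝ) • O) with hm
  have hgoal : (⨅ t : ℝ, (lamMax (M - (2 * t : ℝ) • O) + t ^ 2))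
      = ⨅ t : ℝ, (m t + t ^ 2) := rfl
  rw [hgoal]
  have hAh : ∀ t : ℝ, (M - (2 * t : ℝ) • O).IsHermitian :=
    fun t => hM.sub (isHermitian_real_smul hO)
  have htr_exp : ∀ (ρ : Matrix (Fin d) (Fin d) ℂ) (t : ℝ),
      ((ρ * (M - (2 * t : ℝ) • O)).trace).re
        = ((ρ * M).trace).re - 2 * t * ((ρ * O).trace).re := by
    intro ρ t
    rw [Matrix.mul_sub, Matrix.trace_sub, Matrix.mul_smul, Matrix.trace_smul, Complex.sub_re]
    simp [Complex.real_smul]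
  have hub : ∀ t : ℝ, ∀ p ∈ K, p.1 - 2 * t * p.2 ≤ m t := by
    rintro t p ⟨ρ, ⟨hρ, htrρ⟩, rfl⟩
    have h := trace_le_lamMax hd (hAh t) hρ htrρ
    rw [htr_exp ρ t] at h
    exact h
  have hex : ∀ t : ℝ, ∃ p ∈ K, p.1 - 2 * t * p.2 = m t := by
    intro t
    obtain ⟨ρ, hρ, htrρ, heq⟩ := exists_density_trace_eq hd (hAh t)
    refine ⟨_, ⟨ρ, ⟨hρ, htrρ⟩, rfl⟩, ?_⟩
    rw [← htr_exp ρ t]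
    exact heq
  have hOpsd : O.PosSemidef := by
    have h := Matrix.posSemidef_conjTranspose_mul_self O
    rwa [hO, hOproj] at h
  have hIO : (1 - O).PosSemidef := by
    have h1 : (1 - O)ᴴ = 1 - O := by
      rw [Matrix.conjTranspose_sub, Matrix.conjTranspose_one, hO]
    have h2 : (1 - O) * (1 - O) = 1 - O := by
      rw [Matrix.sub_mul, one_mul, Matrix.mul_sub, Matrix.mul_one, hOproj]
      abel
    have h := Matrix.posSemidef_conjTranspose_mul_self (1 - O)
    rwa [h1, h2] at h
  have hq01 : ∀ ρ : Matrix (Fin d) (Fin d) ℂ, ρ.PosSemidef → ρ.trace = 1 →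
      0 ≤ ((ρ * O).trace).re ∧ ((ρ * O).trace).re ≤ 1 := by
    intro ρ hρ htrρ
    refine ⟨re_trace_psd_mul_nonneg hρ hOpsd, ?_⟩
    have h0 := re_trace_psd_mul_nonneg hρ hIO
    rw [Matrix.mul_sub, Matrix.mul_one, Matrix.trace_sub, htrρ, Complex.sub_re] at h0
    simp only [Complex.one_re] at h0
    linarith
  have hqK : ∀ p ∈ K, |p.2| ≤ 1 := by
    rintro p ⟨ρ, ⟨hρ, htrρ⟩, rfl⟩
    obtain ⟨h1, h2⟩ := hq01 ρ hρ htrρ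
    rw [abs_le]
    constructor <;> simp <;> linarith
  have hKc : IsCompact K := by
    apply IsCompact.image isCompact_density
    exact Continuous.prodMk
      (Complex.continuous_re.comp
        ((Continuous.matrix_mul continuous_id continuous_const).matrix_trace))
      (Complex.continuous_re.comp
        ((Continuous.matrix_mul continuous_id continuous_const).matrix_trace))
  have hKconv : ∀ p ∈ K, ∀ q ∈ K, ∀ a b : ℝ, 0 ≤ a → 0 ≤ b → a + b = 1 →
      (a * p.1 + b * q.1, a * p.2 + b * q.2) ∈ K := by
    rintro p ⟨ρ1, ⟨h1psd, h1tr⟩, rfl⟩ q ⟨ρ2, ⟨h2psd, h2tr⟩, rfl⟩ a b ha hb hab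
    have hcomp : ∀ B : Matrix (Fin d) (Fin d) ℂ,
        (((a • ρ1 + b • ρ2) * B).trace).re
          = a * ((ρ1 * B).trace).re + b * ((ρ2 * B).trace).re := by
      intro B
      rw [Matrix.add_mul, Matrix.smul_mul, Matrix.smul_mul, Matrix.trace_add,
        Matrix.trace_smul, Matrix.trace_smul, Complex.add_re]
      simp [Complex.real_smul]
    refine ⟨a • ρ1 + b • ρ2,
      ⟨(posSemidef_real_smul ha h1psd).add (posSemidef_real_smul hb h2psd), ?_⟩, ?_⟩
    · rw [Matrix.trace_add, Matrix.trace_smul, Matrix.trace_smul, h1tr, h2tr]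
      simp only [smul_eq_mul, mul_one, Complex.real_smul]
      exact_mod_cast congrArg (Complex.ofReal) hab
    · simp only [hcomp]
  -- Lipschitz continuity of m
  have hdiff : ∀ x y : ℝ, m x - m y ≤ 2 * |x - y| := by
    intro x y
    obtain ⟨p, hpK, hpeq⟩ := hex x
    have h1 : p.1 - 2 * y * p.2 ≤ m y := hub y p hpK
    have h2 : 2 * (y - x) * p.2 ≤ 2 * |x - y| := by
      calc 2 * (y - x) * p.2 ≤ |2 * (y - x) * p.2| := le_abs_self _
        _ = 2 * |y - x| * |p.2| := by rw [abs_mul, abs_mul, abs_two]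
        _ ≤ 2 * |y - x| * 1 := mul_le_mul_of_nonneg_left (hqK p hpK) (by positivity)
        _ = 2 * |x - y| := by rw [mul_one, abs_sub_comm]
    linarith
  have hmcont : Continuous m := by
    have hlip : LipschitzWith 2 m := by
      apply LipschitzWith.of_dist_le_mul
      intro x y
      rw [Real.dist_eq, Real.dist_eq]
      have h2 : ((2 : NNReal) : ℝ) = 2 := by norm_num
      rw [h2, abs_sub_le_iff]
      exact ⟨hdiff x y, by rw [abs_sub_comm]; exact hdiff y x⟩
    exact hlip.continuous
  have hfcont : Continuous (fun t : ℝ => m t + t ^ 2) := hmcont.add (continuous_pow 2)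
  -- base point
  obtain ⟨ρ0, hρ0, htr0, -⟩ := exists_density_trace_eq hd hM
  set a0 := ((ρ0 * M).trace).re with ha0
  set q0 := ((ρ0 * O).trace).re with hq0
  have hp0K : ((a0, q0) : ℝ × ℝ) ∈ K := ⟨ρ0, ⟨hρ0, htr0⟩, rfl⟩
  obtain ⟨hq00, hq0one⟩ := hq01 ρ0 hρ0 htr0
  set R : ℝ := |m 0 - a0| + 3 with hR
  have hRpos : 0 < R := by positivity
  have houtside : ∀ t : ℝ, R ≤ |t| → m 0 < m t + t ^ 2 := by
    intro t hRt
    have h1 : a0 - 2 * t * q0 ≤ m t := hub t _ hp0K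
    have h2 : 2 * t * q0 ≤ 2 * |t| := by
      calc 2 * t * q0 ≤ |2 * t * q0| := le_abs_self _
        _ = 2 * |t| * |q0| := by rw [abs_mul, abs_mul, abs_two]
        _ = 2 * |t| * q0 := by rw [abs_of_nonneg hq00]
        _ ≤ 2 * |t| * 1 := mul_le_mul_of_nonneg_left hq0one (by positivity)
        _ = 2 * |t| := mul_one _
    have h3 : m 0 - a0 ≤ |m 0 - a0| := le_abs_self _
    have h4 : t ^ 2 = |t| ^ 2 := (sq_abs t).symm
    have h5 : 1 * |t| ≤ (|t| - 2) * |t| := by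
      apply mul_le_mul_of_nonneg_right _ (abs_nonneg t)
      have := abs_nonneg (m 0 - a0)
      linarith
    have h6 : |m 0 - a0| + 3 ≤ |t| := hRt
    nlinarith [abs_nonneg t]
  have h0mem : (0 : ℝ) ∈ Set.Icc (-R) R := by
    constructor <;> linarith
  obtain ⟨ts, htsmem, htsmin⟩ := (isCompact_Icc (a := -R) (b := R)).exists_isMinOn
    ⟨0, h0mem⟩ hfcont.continuousOn
  have hISmin : ∀ t : ℝ, m ts + ts ^ 2 ≤ m t + t ^ 2 := by
    intro t
    by_cases htI : t ∈ Set.Icc (-R) R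
    · exact htsmin htI
    · rw [Set.mem_Icc] at htI
      push_neg at htI
      have habs : R ≤ |t| := by
        rcases le_or_gt (-R) t with h | h
        · have := htI h
          calc R ≤ t := this.le
            _ ≤ |t| := le_abs_self t
        · calc R ≤ -t := by linarith
            _ ≤ |t| := neg_le_abs t
      have hlt := houtside t habs
      have hts0 : m ts + ts ^ 2 ≤ m 0 + 0 ^ 2 := htsmin h0mem
      have : (0 : ℝ) ^ 2 = 0 := by norm_num
      linarith [hts0, hlt]
  -- apply key in both directions
  obtain ⟨z1, hz1K, hz1eq, hz1q⟩ := key hKc hub hex hqK hISmin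
  have hK'c : IsCompact ((fun p : ℝ × ℝ => (p.1, -p.2)) '' K) :=
    hKc.image (continuous_fst.prodMk continuous_snd.neg)
  have hub' : ∀ t : ℝ, ∀ p ∈ (fun p : ℝ × ℝ => (p.1, -p.2)) '' K,
      p.1 - 2 * t * p.2 ≤ (fun s => m (-s)) t := by
    rintro t p ⟨w, hwK, rfl⟩
    have h := hub (-t) w hwK
    simp only
    linarith [h]
  have hex' : ∀ t : ℝ, ∃ p ∈ (fun p : ℝ × ℝ => (p.1, -p.2)) '' K,
      p.1 - 2 * t * p.2 = (fun s => m (-s)) t := by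
    intro t
    obtain ⟨w, hwK, hweq⟩ := hex (-t)
    refine ⟨(w.1, -w.2), ⟨w, hwK, rfl⟩, ?_⟩
    simp only
    linarith [hweq]
  have hq' : ∀ p ∈ (fun p : ℝ × ℝ => (p.1, -p.2)) '' K, |p.2| ≤ 1 := by
    rintro p ⟨w, hwK, rfl⟩
    simpa [abs_neg] using hqK w hwK
  have hmin' : ∀ t : ℝ, (fun s => m (-s)) (-ts) + (-ts) ^ 2 ≤ (fun s => m (-s)) t + t ^ 2 := by
    intro t
    have h := hISmin (-t)
    simp only [neg_neg]
    have e1 : (-ts : ℝ) ^ 2 = ts ^ 2 := by ring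
    have e2 : (-t : ℝ) ^ 2 = t ^ 2 := by ring
    rw [e1]
    linarith [h, e2.symm.le]
  obtain ⟨z2', hz2K', hz2eq', hz2q'⟩ := key hK'c hub' hex' hq' hmin'
  obtain ⟨z2, hz2K, hz2def⟩ := hz2K'
  have hz2eq : z2.1 - 2 * ts * z2.2 = m ts := by
    have h1 : z2'.1 = z2.1 := by rw [← hz2def]
    have h2 : z2'.2 = -z2.2 := by rw [← hz2def]
    have h3 := hz2eq'
    rw [h1, h2] at h3
    simp only [neg_neg] at h3
    linarith [h3]
  have hz2q : ts ≤ z2.2 := by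
    have h2 : z2'.2 = -z2.2 := by rw [← hz2def]
    rw [h2] at hz2q'
    linarith
  -- produce a point z ∈ K with z.2 = ts and z.1 - 2 ts z.2 = m ts
  obtain ⟨z, hzK, hzeq, hzq⟩ :
      ∃ z ∈ K, z.1 - 2 * ts * z.2 = m ts ∧ z.2 = ts := by
    by_cases hcase : z1.2 = z2.2
    · refine ⟨z1, hz1K, hz1eq, ?_⟩
      have : ts ≤ z1.2 := by rw [hcase]; exact hz2q
      linarith [hz1q]
    · have hlt : z1.2 < z2.2 := lt_of_le_of_ne (by linarith [hz1q, hz2q]) hcase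
      set lam : ℝ := (ts - z1.2) / (z2.2 - z1.2) with hlam
      have hpos : 0 < z2.2 - z1.2 := by linarith
      have hl0 : 0 ≤ lam := div_nonneg (by linarith [hz1q]) hpos.le
      have hl1 : lam ≤ 1 := by
        rw [hlam, div_le_one hpos]
        linarith [hz2q]
      have hmem := hKconv z1 hz1K z2 hz2K (1 - lam) lam (by linarith) hl0 (by ring)
      refine ⟨_, hmem, ?_, ?_⟩
      · simp only
        have e1 : z1.1 = m ts + 2 * ts * z1.2 := by linarith [hz1eq]
        have e2 : z2.1 = m ts + 2 * ts * z2.2 := by linarith [hz2eq]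
        rw [e1, e2]
        ring
      · simp only
        rw [hlam]
        field_simp
        ring
  -- final assembly
  have hSne : S.Nonempty := ⟨a0 - q0 ^ 2, ρ0, hρ0, htr0, rfl⟩
  have hSle : ∀ x ∈ S, ∀ t : ℝ, x ≤ m t + t ^ 2 := by
    rintro x ⟨ρ, hρ, htrρ, rfl⟩ t
    have h1 := hub t _ ⟨ρ, ⟨hρ, htrρ⟩, rfl⟩
    simp only at h1
    nlinarith [sq_nonneg (t - ((ρ * O).trace).re)]
  have hbddS : BddAbove S := ⟨m 0 + 0 ^ 2, fun x hx => hSle x hx 0⟩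
  have hfbdd : BddBelow (Set.range fun t : ℝ => m t + t ^ 2) := by
    refine ⟨a0 - q0 ^ 2, ?_⟩
    rintro y ⟨t, rfl⟩
    have h1 : a0 - 2 * t * q0 ≤ m t := hub t _ hp0K
    show a0 - q0 ^ 2 ≤ m t + t ^ 2
    nlinarith [sq_nonneg (t - q0)]
  apply le_antisymm
  · exact csSup_le hSne fun x hx => le_ciInf fun t => hSle x hx t
  · obtain ⟨ρz, ⟨hρz, htrz⟩, hφz⟩ := hzK
    have hz1c : ((ρz * M).trace).re = z.1 := congrArg Prod.fst hφz
    have hz2c : ((ρz * O).trace).re = z.2 := congrArg Prod.snd hφz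
    have hxS : z.1 - z.2 ^ 2 ∈ S := ⟨ρz, hρz, htrz, by rw [hz1c, hz2c]⟩
    refine ciInf_le_of_le hfbdd ts ?_
    have hval : m ts + ts ^ 2 = z.1 - z.2 ^ 2 := by
      rw [hzq] at hzeq ⊢
      nlinarith [hzeq]
    rw [hval]
    exact le_csSup hbddS hxS
end
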